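/- Let D_l = ⟨a, b | a² = b² = (ab)^l = 1⟩ be the dihedral group of order 2l with l ≥ 2, let ε₁, ε₂, ... be independent random variables uniform on {0,1}, and let Y_t = a^{ε₁} b^{ε₂} a^{ε₃} ⋯ (alternating, t factors). Let p_t(x) = P(d(Y_t, {e, a}) = x) for 0 ≤ x ≤ l−1, where d denotes word-metric distance in the Cayley graph of D_l with generators {a, b}. Then for every t ≥ 0, the sequence (p_t(0), p_t(1), ..., p_t(l−1)) is non-increasing in x. -/

import Mathlib

/-- Word length of `g` with respect to a set `S` of generators. -/
noncomputable def lengthWrt {G : Type*} [Group G] (S : Set G) (g : G) : ℕ :=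
  sInf {n | ∃ L : List G, (∀ x ∈ L, x ∈ S) ∧ L.length = n ∧ L.prod = g}

/-- The generators `a = sr 0`, `b = sr 1` of the dihedral group. -/
def dihGens (l : ℕ) : Set (DihedralGroup l) := {DihedralGroup.sr 0, DihedralGroup.sr 1}

/-- The distance from `Y` to the edge `{e, a}` of the Cayley graph of `D_l`
with respect to `{a, b}`, namely `min(|Y|, |Y·a|)`. -/
noncomputable def dEdge (l : ℕ) (Y : DihedralGroup l) : ℕ :=
  min (lengthWrt (dihGens l) Y) (lengthWrt (dihGens l) (Y * DihedralGroup.sr 0))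

/-- The alternating random product `Y_t = a^{ε₁} b^{ε₂} a^{ε₃} ⋯` (t factors). -/
def altProd (l t : ℕ) (ε : Fin t → Bool) : DihedralGroup l :=
  ((List.finRange t).map (fun i =>
    if ε i then (if (i : ℕ) % 2 = 0 then DihedralGroup.sr 0 else DihedralGroup.sr 1)
    else 1)).prod

namespace Stmt5Aux
open DihedralGroup

/-! ### Arithmetic on cycle positions -/

def stepA (p : ℕ) : ℕ := if p % 2 = 0 then p + 1 else p - 1

def stepB (l p : ℕ) : ℕ :=
  if p % 2 = 0 then (if p = 0 then 2 * l - 1 else p - 1)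
  else (if p = 2 * l - 1 then 0 else p + 1)

def refl1 (l p : ℕ) : ℕ := if p ≤ 1 then 1 - p else 2 * l + 1 - p

def DD (l p : ℕ) : ℕ := min p (2 * l - p)

def WD (l p : ℕ) : ℕ := min (DD l p) (DD l (stepA p))

def tau (l t p : ℕ) : ℕ := if t % 2 = 0 then stepA p else stepB l p

lemma stepA_lt {l p : ℕ} (hl : 2 ≤ l) (hp : p < 2 * l) : stepA p < 2 * l := by
  unfold stepA; split_ifs <;> omega

lemma stepB_lt {l p : ℕ} (hl : 2 ≤ l) (hp : p < 2 * l) : stepB l p < 2 * l := by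
  unfold stepB; split_ifs <;> omega

lemma refl1_lt {l p : ℕ} (hl : 2 ≤ l) (hp : p < 2 * l) : refl1 l p < 2 * l := by
  unfold refl1; split_ifs <;> omega

lemma stepA_invol {l p : ℕ} (hp : p < 2 * l) : stepA (stepA p) = p := by
  unfold stepA; split_ifs <;> omega

lemma stepB_invol {l p : ℕ} (hl : 2 ≤ l) (hp : p < 2 * l) : stepB l (stepB l p) = p := by
  unfold stepB; split_ifs <;> first | omega | contradiction

lemma tau_invol {l t p : ℕ} (hl : 2 ≤ l) (hp : p < 2 * l) : tau l t (tau l t p) = p := by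
  unfold tau; split_ifs with h
  · exact stepA_invol hp
  · exact stepB_invol hl hp

lemma tau_lt {l t p : ℕ} (hl : 2 ≤ l) (hp : p < 2 * l) : tau l t p < 2 * l := by
  unfold tau; split_ifs
  · exact stepA_lt hl hp
  · exact stepB_lt hl hp

lemma refl1_stepA {l p : ℕ} (hl : 2 ≤ l) (hp : p < 2 * l) :
    refl1 l (stepA p) = stepA (refl1 l p) := by
  unfold refl1 stepA; split_ifs <;> first | omega | contradiction

lemma refl1_stepB {l p : ℕ} (hl : 2 ≤ l) (hp : p < 2 * l) :
    refl1 l (stepB l p) = stepB l (refl1 l p) := by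
  unfold refl1 stepB; split_ifs <;> first | omega | contradiction

lemma DD_stepA_le {l p : ℕ} (hl : 2 ≤ l) (hp : p < 2 * l) :
    DD l (stepA p) ≤ DD l p + 1 := by
  unfold DD stepA; split_ifs <;> first | omega | contradiction

lemma DD_stepB_le {l p : ℕ} (hl : 2 ≤ l) (hp : p < 2 * l) :
    DD l (stepB l p) ≤ DD l p + 1 := by
  unfold DD stepB; split_ifs <;> first | omega | contradiction

lemma fiber_even {l x p : ℕ} (hl : 2 ≤ l) (hx : x % 2 = 0) (hxl : x + 1 ≤ l)
    (hp : p < 2 * l) : WD l p = x ↔ p = x ∨ p = x + 1 := by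
  unfold WD DD stepA; split_ifs <;> first | omega | contradiction

lemma fiber_odd {l x p : ℕ} (hl : 2 ≤ l) (hx : x % 2 = 1) (hxl : x + 1 ≤ l)
    (hp : p < 2 * l) : WD l p = x ↔ p = 2 * l - 1 - x ∨ p = 2 * l - x := by
  unfold WD DD stepA; split_ifs <;> first | omega | contradiction

lemma stepA_eq_zero (q : ℕ) : stepA q = 0 ↔ q = 1 := by
  unfold stepA
  split_ifs <;> first | omega | (simp only [false_iff]; omega)

/-! ### The position map on the dihedral group -/

def pos' {l : ℕ} : DihedralGroup l → ℕ
  | DihedralGroup.r i => 2 * i.val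
  | DihedralGroup.sr i => if i.val = 0 then 1 else 2 * l + 1 - 2 * i.val

lemma val_one_sub {l : ℕ} (hl : 2 ≤ l) (i : ZMod l) :
    ((1 : ZMod l) - i).val = if i.val ≤ 1 then 1 - i.val else l + 1 - i.val := by
  haveI : NeZero l := ⟨by omega⟩
  have hv : i.val < l := ZMod.val_lt i
  have h1 : ((1 : ZMod l) - i) = ((l + 1 - i.val : ℕ) : ZMod l) := by
    have h2 : ((l + 1 - i.val : ℕ) : ZMod l) = ((l + 1 : ℕ) : ZMod l) - (i.val : ℕ) :=
      Nat.cast_sub (by omega)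
    rw [h2]
    have h3 : ((i.val : ℕ) : ZMod l) = i := by rw [ZMod.natCast_val, ZMod.cast_id]
    rw [h3]
    push_cast [ZMod.natCast_self]
    ring
  rw [h1, ZMod.val_natCast]
  rcases Nat.lt_or_ge i.val 1 with h | h
  · have h4 : i.val = 0 := by omega
    simp only [h4]
    have h5 : l + 1 - 0 = 1 + l := by omega
    rw [h5, Nat.add_mod_right]
    simp [Nat.mod_eq_of_lt (show 1 < l by omega)]
  · rcases Nat.eq_or_lt_of_le h with h1' | h1'
    · have h6 : l + 1 - i.val = l := by omega
      simp [h6, Nat.mod_self, ← h1']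
    · have h2 : l + 1 - i.val < l := by omega
      rw [Nat.mod_eq_of_lt h2]
      have h7 : ¬ (i.val ≤ 1) := by omega
      simp [h7]

lemma val_neg' {l : ℕ} (hl : 2 ≤ l) (i : ZMod l) :
    (-i).val = if i.val = 0 then 0 else l - i.val := by
  haveI : NeZero l := ⟨by omega⟩
  rw [ZMod.neg_val]
  by_cases hi : i = 0
  · simp [hi]
  · have : i.val ≠ 0 := fun h => hi ((ZMod.val_eq_zero i).mp h)
    simp [hi, this]

lemma pos'_lt {l : ℕ} (hl : 2 ≤ l) (g : DihedralGroup l) : pos' g < 2 * l := by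
  haveI : NeZero l := ⟨by omega⟩
  cases g with
  | r i => have := ZMod.val_lt i; simp only [pos']; omega
  | sr i => have := ZMod.val_lt i; simp only [pos']; split_ifs <;> omega

lemma pos'_mul_a {l : ℕ} (hl : 2 ≤ l) (g : DihedralGroup l) :
    pos' (g * sr 0) = stepA (pos' g) := by
  haveI : NeZero l := ⟨by omega⟩
  have key : ∀ i : ZMod l, pos' (DihedralGroup.sr (0 - i)) = stepA (pos' (DihedralGroup.r i))
      ∧ pos' (DihedralGroup.r (0 - i)) = stepA (pos' (DihedralGroup.sr i)) := by
    intro i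
    have hv : i.val < l := ZMod.val_lt i
    have hneg : (0 - i : ZMod l) = -i := by ring
    have h0 := val_neg' hl i
    rw [hneg]
    by_cases hz : i.val = 0
    · rw [hz] at h0; simp only [if_pos rfl] at h0
      simp only [pos', stepA, h0, hz]
      norm_num
    · rw [if_neg hz] at h0
      constructor <;>
        · simp only [pos', stepA, h0, Nat.mul_mod_right, eq_self_iff_true, if_true]
          split_ifs <;> first | omega | contradiction
  cases g with
  | r i => rw [r_mul_sr]; exact (key i).1
  | sr i => rw [sr_mul_sr]; exact (key i).2

lemma pos'_mul_b {l : ℕ} (hl : 2 ≤ l) (g : DihedralGroup l) :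
    pos' (g * sr 1) = stepB l (pos' g) := by
  haveI : NeZero l := ⟨by omega⟩
  have key : ∀ i : ZMod l, pos' (DihedralGroup.sr (1 - i)) = stepB l (pos' (DihedralGroup.r i))
      ∧ pos' (DihedralGroup.r (1 - i)) = stepB l (pos' (DihedralGroup.sr i)) := by
    intro i
    have hv : i.val < l := ZMod.val_lt i
    have h0 := val_one_sub hl i
    rcases Nat.lt_or_ge i.val 2 with h | h
    · by_cases h1 : i.val = 0
      · rw [h1] at h0; norm_num at h0
        constructor <;>
          · simp only [pos', stepB, h0, h1]
            split_ifs <;> first | omega | contradiction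
      · have h2 : i.val = 1 := by omega
        rw [h2] at h0; norm_num at h0
        constructor <;>
          · simp only [pos', stepB, h0, h2, ZMod.val_zero]
            split_ifs <;> first | omega | contradiction
    · rw [if_neg (by omega)] at h0
      constructor <;>
        · simp only [pos', h0]
          unfold stepB
          split_ifs <;> first | omega | contradiction
  cases g with
  | r i => rw [r_mul_sr]; exact (key i).1
  | sr i => rw [sr_mul_sr]; exact (key i).2

/-! ### Geodesic words -/

def wplus (l n : ℕ) : List (DihedralGroup l) :=
  (List.range n).map fun i => if i % 2 = 0 then sr 0 else sr 1

def wminus (l n : ℕ) : List (DihedralGroup l) :=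
  (List.range n).map fun i => if i % 2 = 0 then sr 1 else sr 0

lemma wplus_prod (l n : ℕ) :
    (wplus l n).prod = if n % 2 = 0 then r ((n / 2 : ℕ) : ZMod l)
      else sr (-((n / 2 : ℕ) : ZMod l)) := by
  induction n with
  | zero => simp [wplus]
  | succ n ih =>
    unfold wplus at ih ⊢
    rw [List.range_succ, List.map_append, List.map_cons, List.map_nil,
      List.prod_append, List.prod_cons, List.prod_nil, mul_one, ih]
    rcases Nat.mod_two_eq_zero_or_one n with h0 | h0
    · have h1 : ¬ (n + 1) % 2 = 0 := by omega
      have h2 : (n + 1) / 2 = n / 2 := by omega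
      rw [if_pos h0, if_pos h0, if_neg h1, h2, r_mul_sr]
      congr 1
      ring
    · have h0' : ¬ n % 2 = 0 := by omega
      have h1 : (n + 1) % 2 = 0 := by omega
      have h2 : (n + 1) / 2 = n / 2 + 1 := by omega
      rw [if_neg h0', if_neg h0', if_pos h1, h2, sr_mul_sr]
      congr 1
      push_cast
      ring

lemma wminus_prod (l n : ℕ) :
    (wminus l n).prod = if n % 2 = 0 then r (-((n / 2 : ℕ) : ZMod l))
      else sr (((n / 2 : ℕ) : ZMod l) + 1) := by
  induction n with
  | zero => simp [wminus]
  | succ n ih =>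
    unfold wminus at ih ⊢
    rw [List.range_succ, List.map_append, List.map_cons, List.map_nil,
      List.prod_append, List.prod_cons, List.prod_nil, mul_one, ih]
    rcases Nat.mod_two_eq_zero_or_one n with h0 | h0
    · have h1 : ¬ (n + 1) % 2 = 0 := by omega
      have h2 : (n + 1) / 2 = n / 2 := by omega
      rw [if_pos h0, if_pos h0, if_neg h1, h2, r_mul_sr]
      congr 1
      ring
    · have h0' : ¬ n % 2 = 0 := by omega
      have h1 : (n + 1) % 2 = 0 := by omega
      have h2 : (n + 1) / 2 = n / 2 + 1 := by omega
      rw [if_neg h0', if_neg h0', if_pos h1, h2, sr_mul_sr]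
      congr 1
      push_cast
      ring

lemma neg_cast_sub {l k : ℕ} (h : k ≤ l) : (-((l - k : ℕ) : ZMod l)) = ((k : ℕ) : ZMod l) := by
  have h1 : ((l - k : ℕ) : ZMod l) = ((l : ℕ) : ZMod l) - (k : ℕ) := Nat.cast_sub h
  rw [h1, ZMod.natCast_self]
  ring

lemma cast_val_self {l : ℕ} [NeZero l] (i : ZMod l) : ((i.val : ℕ) : ZMod l) = i := by
  rw [ZMod.natCast_val, ZMod.cast_id]

lemma prod_wplus_pos' {l : ℕ} (hl : 2 ≤ l) (g : DihedralGroup l) :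
    (wplus l (pos' g)).prod = g := by
  haveI : NeZero l := ⟨by omega⟩
  cases g with
  | r i =>
    have hv : i.val < l := ZMod.val_lt i
    rw [wplus_prod]
    have h0 : (2 * i.val) % 2 = 0 := by omega
    have h1 : 2 * i.val / 2 = i.val := by omega
    simp only [pos', h0, if_pos rfl, h1, cast_val_self, if_true, eq_self_iff_true]
  | sr i =>
    have hv : i.val < l := ZMod.val_lt i
    rw [wplus_prod]
    by_cases hz : i.val = 0
    · have hi : i = 0 := (ZMod.val_eq_zero i).mp hz
      simp only [pos', hz, if_pos rfl]
      norm_num [hi]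
    · have h0 : pos' (DihedralGroup.sr i) = 2 * l + 1 - 2 * i.val := by
        simp only [pos', if_neg hz]
      rw [h0]
      have h1 : ¬ (2 * l + 1 - 2 * i.val) % 2 = 0 := by omega
      have h2 : (2 * l + 1 - 2 * i.val) / 2 = l - i.val := by omega
      rw [if_neg h1, h2, neg_cast_sub (by omega), cast_val_self]

lemma prod_wminus_pos' {l : ℕ} (hl : 2 ≤ l) (g : DihedralGroup l) :
    (wminus l (2 * l - pos' g)).prod = g := by
  haveI : NeZero l := ⟨by omega⟩
  cases g with
  | r i =>
    have hv : i.val < l := ZMod.val_lt i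
    rw [wminus_prod]
    have h0 : (2 * l - 2 * i.val) % 2 = 0 := by omega
    have h1 : (2 * l - 2 * i.val) / 2 = l - i.val := by omega
    simp only [pos', h0, if_pos rfl, h1, neg_cast_sub (le_of_lt hv), cast_val_self,
      if_true, eq_self_iff_true]
  | sr i =>
    have hv : i.val < l := ZMod.val_lt i
    rw [wminus_prod]
    by_cases hz : i.val = 0
    · have hi : i = 0 := (ZMod.val_eq_zero i).mp hz
      have h0 : pos' (DihedralGroup.sr i) = 1 := by simp only [pos', if_pos hz]
      rw [h0]
      have h1 : ¬ (2 * l - 1) % 2 = 0 := by omega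
      have h2 : (2 * l - 1) / 2 = l - 1 := by omega
      rw [if_neg h1, h2, hi]
      have h3 : ((l - 1 : ℕ) : ZMod l) = ((l : ℕ) : ZMod l) - 1 := by
        rw [Nat.cast_sub (by omega)]; norm_num
      rw [h3, ZMod.natCast_self]
      norm_num
    · have h0 : pos' (DihedralGroup.sr i) = 2 * l + 1 - 2 * i.val := by
        simp only [pos', if_neg hz]
      rw [h0]
      have h1 : 2 * l - (2 * l + 1 - 2 * i.val) = 2 * i.val - 1 := by omega
      have h2 : ¬ (2 * i.val - 1) % 2 = 0 := by omega
      have h3 : (2 * i.val - 1) / 2 = i.val - 1 := by omega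
      rw [h1, if_neg h2, h3]
      have h4 : ((i.val - 1 : ℕ) : ZMod l) = ((i.val : ℕ) : ZMod l) - 1 := by
        rw [Nat.cast_sub (by omega)]; norm_num
      rw [h4, cast_val_self]
      norm_num

/-! ### The word–length formula -/

lemma pos'_one {l : ℕ} : pos' (1 : DihedralGroup l) = 0 := by
  rw [one_def]; simp [pos', ZMod.val_zero]

lemma lower_bound {l : ℕ} (hl : 2 ≤ l) (L : List (DihedralGroup l))
    (hm : ∀ x ∈ L, x ∈ dihGens l) : DD l (pos' L.prod) ≤ L.length := by
  induction L using List.reverseRecOn with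
  | nil => simp [pos'_one, DD]
  | append_singleton L s ih =>
    have hms : s ∈ dihGens l := hm s (by simp)
    have hmL : ∀ x ∈ L, x ∈ dihGens l := fun x hx => hm x (by simp [hx])
    have hL := ih hmL
    rw [List.prod_append, List.prod_cons, List.prod_nil, mul_one, List.length_append]
    rcases hms with hs | hs
    · rw [hs, pos'_mul_a hl]
      have := DD_stepA_le hl (pos'_lt hl L.prod)
      simpa using by omega
    · rw [Set.mem_singleton_iff] at hs
      rw [hs, pos'_mul_b hl]
      have := DD_stepB_le hl (pos'_lt hl L.prod)
      simpa using by omega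

lemma wplus_mem {l n : ℕ} : ∀ x ∈ wplus l n, x ∈ dihGens l := by
  intro x hx
  simp only [wplus, List.mem_map] at hx
  obtain ⟨i, _, rfl⟩ := hx
  split_ifs
  · exact Set.mem_insert _ _
  · exact Set.mem_insert_iff.mpr (Or.inr rfl)

lemma wminus_mem {l n : ℕ} : ∀ x ∈ wminus l n, x ∈ dihGens l := by
  intro x hx
  simp only [wminus, List.mem_map] at hx
  obtain ⟨i, _, rfl⟩ := hx
  split_ifs
  · exact Set.mem_insert_iff.mpr (Or.inr rfl)
  · exact Set.mem_insert _ _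

lemma lengthWrt_eq {l : ℕ} (hl : 2 ≤ l) (g : DihedralGroup l) :
    lengthWrt (dihGens l) g = DD l (pos' g) := by
  apply le_antisymm
  · rcases Nat.le_total (pos' g) (2 * l - pos' g) with h | h
    · have hdd : DD l (pos' g) = pos' g := min_eq_left h
      rw [hdd]
      apply Nat.sInf_le
      exact ⟨wplus l (pos' g), wplus_mem, by simp [wplus], prod_wplus_pos' hl g⟩
    · have hdd : DD l (pos' g) = 2 * l - pos' g := min_eq_right h
      rw [hdd]
      apply Nat.sInf_le
      exact ⟨wminus l (2 * l - pos' g), wminus_mem, by simp [wminus], prod_wminus_pos' hl g⟩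
  · apply le_csInf
    · exact ⟨pos' g, wplus l (pos' g), wplus_mem, by simp [wplus], prod_wplus_pos' hl g⟩
    · rintro n ⟨L, hm, hlen, hprod⟩
      rw [← hlen, ← hprod]
      exact lower_bound hl L hm

lemma dEdge_eq {l : ℕ} (hl : 2 ≤ l) (Y : DihedralGroup l) :
    dEdge l Y = WD l (pos' Y) := by
  unfold dEdge WD
  rw [lengthWrt_eq hl, lengthWrt_eq hl, pos'_mul_a hl]

/-! ### Counting -/

lemma altProd_snoc (l t : ℕ) (ε : Fin t → Bool) (b : Bool) :
    altProd l (t + 1) (Fin.snoc ε b) = altProd l t ε *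
      (if b then (if t % 2 = 0 then sr 0 else sr 1) else 1) := by
  unfold altProd
  rw [List.finRange_succ_last, List.map_append, List.map_map, List.map_cons, List.map_nil,
    List.prod_append, List.prod_cons, List.prod_nil, mul_one]
  congr 1
  · apply congrArg
    apply List.map_congr_left
    intro j _
    simp [Function.comp, Fin.snoc_castSucc]
  · simp [Fin.snoc_last]

lemma pos'_altProd_snoc {l t : ℕ} (hl : 2 ≤ l) (ε : Fin t → Bool) (b : Bool) :
    pos' (altProd l (t + 1) (Fin.snoc ε b)) =
      if b then tau l t (pos' (altProd l t ε)) else pos' (altProd l t ε) := by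
  rw [altProd_snoc]
  cases b
  · simp
  · rw [if_pos rfl, if_pos rfl]
    unfold tau
    rcases Nat.mod_two_eq_zero_or_one t with h | h
    · rw [if_pos h, if_pos h, pos'_mul_a hl]
    · rw [if_neg (by omega), if_neg (by omega), pos'_mul_b hl]

noncomputable def cnt (l t p : ℕ) : ℕ :=
  Nat.card {ε : Fin t → Bool // pos' (altProd l t ε) = p}

/-- split a subtype of a product with `Bool` according to the boolean. -/
def boolSplit {β : Type*} (R : Bool × β → Prop) :
    {y : Bool × β // R y} ≃ {z : β // R (true, z)} ⊕ {z : β // R (false, z)} where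
  toFun := fun ⟨(b, z), h⟩ => match b, h with
    | true, h => Sum.inl ⟨z, h⟩
    | false, h => Sum.inr ⟨z, h⟩
  invFun := fun s => match s with
    | Sum.inl ⟨z, h⟩ => ⟨(true, z), h⟩
    | Sum.inr ⟨z, h⟩ => ⟨(false, z), h⟩
  left_inv := fun ⟨(b, z), h⟩ => by cases b <;> rfl
  right_inv := fun s => by rcases s with ⟨z, h⟩ | ⟨z, h⟩ <;> rfl

lemma cnt_succ {l t p : ℕ} (hl : 2 ≤ l) (hp : p < 2 * l) :
    cnt l (t + 1) p = cnt l t p + cnt l t (tau l t p) := by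
  unfold cnt
  have e1 : {ε : Fin (t + 1) → Bool // pos' (altProd l (t + 1) ε) = p} ≃
      {y : Bool × (Fin t → Bool) // pos' (altProd l (t + 1) (Fin.snoc y.2 y.1)) = p} := by
    refine (Equiv.subtypeEquiv (Fin.snocEquiv (fun _ => Bool)).symm fun ε => ?_)
    simp [Fin.snocEquiv, Fin.snoc_init_self]
  rw [Nat.card_congr e1]
  have e2 : {y : Bool × (Fin t → Bool) // pos' (altProd l (t + 1) (Fin.snoc y.2 y.1)) = p} ≃
      {z : Fin t → Bool // pos' (altProd l (t + 1) (Fin.snoc z true)) = p} ⊕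
      {z : Fin t → Bool // pos' (altProd l (t + 1) (Fin.snoc z false)) = p} :=
    boolSplit _
  rw [Nat.card_congr e2, Nat.card_sum]
  have e3 : {z : Fin t → Bool // pos' (altProd l (t + 1) (Fin.snoc z true)) = p} ≃
      {z : Fin t → Bool // pos' (altProd l t z) = tau l t p} := by
    apply Equiv.subtypeEquivRight
    intro z
    rw [pos'_altProd_snoc hl, if_pos rfl]
    constructor
    · intro h; rw [← h, tau_invol hl (pos'_lt hl _)]
    · intro h; rw [h, tau_invol hl hp]
  have e4 : {z : Fin t → Bool // pos' (altProd l (t + 1) (Fin.snoc z false)) = p} ≃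
      {z : Fin t → Bool // pos' (altProd l t z) = p} := by
    apply Equiv.subtypeEquivRight
    intro z
    rw [pos'_altProd_snoc hl]
    simp
  rw [Nat.card_congr e3, Nat.card_congr e4, add_comm]

lemma altProd_zero (l : ℕ) (ε : Fin 0 → Bool) : altProd l 0 ε = 1 := by
  unfold altProd; simp

lemma cnt_zero (l p : ℕ) : cnt l 0 p = if p = 0 then 1 else 0 := by
  unfold cnt
  split_ifs with h
  · subst h
    have hall : ∀ ε : Fin 0 → Bool, pos' (altProd l 0 ε) = 0 := by
      intro ε; rw [altProd_zero, pos'_one]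
    rw [Nat.card_congr (Equiv.subtypeUnivEquiv hall)]
    simp [Nat.card_eq_fintype_card]
  · have : IsEmpty {ε : Fin 0 → Bool // pos' (altProd l 0 ε) = p} := by
      constructor
      rintro ⟨ε, hε⟩
      rw [altProd_zero, pos'_one] at hε
      exact h hε.symm
    simp [Nat.card_of_isEmpty]

/-! ### The invariant -/

def Inv (l : ℕ) (c : ℕ → ℕ) : Prop :=
  (∀ p, p < 2 * l → c (refl1 l p) = c p) ∧ (∀ k, k + 1 ≤ l → c (k + 1) ≤ c k)

lemma chain {l : ℕ} {c : ℕ → ℕ} (hl : 2 ≤ l) (h : Inv l c) :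
    ∀ j k : ℕ, j ≤ k → k ≤ l + 1 → c k ≤ c j := by
  intro j k hjk hk
  induction k with
  | zero =>
    have hj : j = 0 := Nat.le_zero.mp hjk
    subst hj; exact le_rfl
  | succ k ih =>
    rcases Nat.eq_or_lt_of_le hjk with rfl | hlt
    · exact le_refl _
    · have hjk' : j ≤ k := by omega
      rcases Nat.lt_or_ge (k + 1) (l + 1) with h1 | h1
      · exact le_trans (h.2 k (by omega)) (ih hjk' (by omega))
      · have hkl : k = l := by omega
        subst hkl
        have hrefl : refl1 k (k + 1) = k := by
          unfold refl1; split_ifs <;> first | omega | contradiction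
        have hA := h.1 (k + 1) (by omega)
        rw [hrefl] at hA
        rw [← hA]
        exact ih (by omega) (by omega)

lemma inv_stepA {l : ℕ} {c c' : ℕ → ℕ} (hl : 2 ≤ l)
    (hrec : ∀ p, p < 2 * l → c' p = c p + c (stepA p)) (h : Inv l c) : Inv l c' := by
  constructor
  · intro p hp
    rw [hrec _ (refl1_lt hl hp), hrec _ hp, h.1 p hp, ← refl1_stepA hl hp,
      h.1 _ (stepA_lt hl hp)]
  · intro k hk
    have hk2 : k < 2 * l := by omega
    have hk12 : k + 1 < 2 * l := by omega
    rw [hrec _ hk2, hrec _ hk12]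
    rcases Nat.mod_two_eq_zero_or_one k with hpar | hpar
    · have e1 : stepA k = k + 1 := by unfold stepA; split_ifs <;> omega
      have e2 : stepA (k + 1) = k := by unfold stepA; split_ifs <;> omega
      rw [e1, e2]; omega
    · have e1 : stepA k = k - 1 := by unfold stepA; split_ifs <;> omega
      have e2 : stepA (k + 1) = k + 2 := by unfold stepA; split_ifs <;> omega
      rw [e1, e2]
      have c1 : c (k + 1) ≤ c k := chain hl h k (k + 1) (by omega) (by omega)
      have c2 : c (k + 2) ≤ c (k - 1) := chain hl h (k - 1) (k + 2) (by omega) (by omega)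
      omega

lemma inv_stepB {l : ℕ} {c c' : ℕ → ℕ} (hl : 2 ≤ l)
    (hrec : ∀ p, p < 2 * l → c' p = c p + c (stepB l p)) (h : Inv l c) : Inv l c' := by
  constructor
  · intro p hp
    rw [hrec _ (refl1_lt hl hp), hrec _ hp, h.1 p hp, ← refl1_stepB hl hp,
      h.1 _ (stepB_lt hl hp)]
  · intro k hk
    have hk2 : k < 2 * l := by omega
    have hk12 : k + 1 < 2 * l := by omega
    rw [hrec _ hk2, hrec _ hk12]
    rcases Nat.mod_two_eq_zero_or_one k with hpar | hpar
    · rcases Nat.eq_zero_or_pos k with rfl | hkpos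
      · have e1 : stepB l 0 = 2 * l - 1 := by
          unfold stepB; split_ifs <;> first | omega | contradiction
        have e2 : stepB l 1 = 2 := by
          unfold stepB; split_ifs <;> first | omega | contradiction
        rw [e1, e2]
        have hA := h.1 (2 * l - 1) (by omega)
        have hrefl : refl1 l (2 * l - 1) = 2 := by
          unfold refl1; split_ifs <;> first | omega | contradiction
        rw [hrefl] at hA
        have c1 : c 1 ≤ c 0 := chain hl h 0 1 (by omega) (by omega)
        simp only [Nat.zero_add]
        omega
      · have e1 : stepB l k = k - 1 := by
          unfold stepB; split_ifs <;> first | omega | contradiction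
        have e2 : stepB l (k + 1) = k + 2 := by
          unfold stepB; split_ifs <;> first | omega | contradiction
        rw [e1, e2]
        have c1 : c (k + 1) ≤ c k := chain hl h k (k + 1) (by omega) (by omega)
        have c2 : c (k + 2) ≤ c (k - 1) := chain hl h (k - 1) (k + 2) (by omega) (by omega)
        omega
    · have e1 : stepB l k = k + 1 := by
        unfold stepB; split_ifs <;> first | omega | contradiction
      have e2 : stepB l (k + 1) = k := by
        unfold stepB; split_ifs <;> first | omega | contradiction
      rw [e1, e2]; omega

lemma tau_zero (l p : ℕ) : tau l 0 p = stepA p := by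
  unfold tau; norm_num

lemma cnt_one {l p : ℕ} (hl : 2 ≤ l) (hp : p < 2 * l) :
    cnt l 1 p = (if p = 0 then 1 else 0) + (if stepA p = 0 then 1 else 0) := by
  have h := cnt_succ (t := 0) hl hp
  rw [tau_zero] at h
  rw [h, cnt_zero, cnt_zero]

lemma inv_one {l : ℕ} (hl : 2 ≤ l) : Inv l (cnt l 1) := by
  constructor
  · intro p hp
    rw [cnt_one hl (refl1_lt hl hp), cnt_one hl hp]
    simp only [stepA_eq_zero]
    rcases Nat.lt_or_ge p 2 with h2 | h2
    · have e : refl1 l p = 1 - p := by unfold refl1; rw [if_pos (by omega)]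
      rw [e]; split_ifs <;> first | omega | contradiction
    · have e : refl1 l p = 2 * l + 1 - p := by unfold refl1; rw [if_neg (by omega)]
      rw [e]; split_ifs <;> first | omega | contradiction
  · intro k hk
    rw [cnt_one hl (by omega), cnt_one hl (by omega)]
    simp only [stepA_eq_zero]
    split_ifs <;> first | omega | contradiction

lemma inv_succ {l t : ℕ} (hl : 2 ≤ l) (h : Inv l (cnt l t)) : Inv l (cnt l (t + 1)) := by
  rcases Nat.mod_two_eq_zero_or_one t with ht | ht
  · apply inv_stepA hl (c := cnt l t) _ h
    intro p hp
    rw [cnt_succ hl hp]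
    congr 2
    unfold tau
    rw [if_pos ht]
  · apply inv_stepB hl (c := cnt l t) _ h
    intro p hp
    rw [cnt_succ hl hp]
    congr 2
    unfold tau
    rw [if_neg (by omega)]

lemma inv_cnt {l t : ℕ} (hl : 2 ≤ l) (ht : 1 ≤ t) : Inv l (cnt l t) := by
  induction t with
  | zero => omega
  | succ t ih =>
    rcases Nat.eq_zero_or_pos t with rfl | ht'
    · exact inv_one hl
    · exact inv_succ hl (ih ht')

/-! ### Fiber cardinalities -/

lemma card_pair {α : Type*} [Finite α] (P Q : α → Prop) (h : ∀ x, ¬ (P x ∧ Q x)) :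
    Nat.card {x // P x ∨ Q x} = Nat.card {x // P x} + Nat.card {x // Q x} := by
  haveI := Classical.decPred P
  have hd : Disjoint P Q := by
    rw [Pi.disjoint_iff]
    intro x
    rw [Prop.disjoint_iff]
    exact h x
  haveI : Finite {x // P x} := Subtype.finite
  haveI : Finite {x // Q x} := Subtype.finite
  rw [Nat.card_congr (subtypeOrEquiv P Q hd), Nat.card_sum]

lemma card_even {l t x : ℕ} (hl : 2 ≤ l) (hx : x % 2 = 0) (hxl : x + 1 ≤ l) :
    Nat.card {ε : Fin t → Bool // dEdge l (altProd l t ε) = x} =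
      cnt l t x + cnt l t (x + 1) := by
  unfold cnt
  have e : {ε : Fin t → Bool // dEdge l (altProd l t ε) = x} ≃
      {ε : Fin t → Bool // pos' (altProd l t ε) = x ∨ pos' (altProd l t ε) = x + 1} :=
    Equiv.subtypeEquivRight (fun ε => by
      rw [dEdge_eq hl]
      exact fiber_even hl hx hxl (pos'_lt hl _))
  rw [Nat.card_congr e]
  exact card_pair (fun ε => pos' (altProd l t ε) = x)
    (fun ε => pos' (altProd l t ε) = x + 1) (fun ε h => by omega)

lemma card_odd {l t x : ℕ} (hl : 2 ≤ l) (hx : x % 2 = 1) (hxl : x + 1 ≤ l) :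
    Nat.card {ε : Fin t → Bool // dEdge l (altProd l t ε) = x} =
      cnt l t (2 * l - 1 - x) + cnt l t (2 * l - x) := by
  unfold cnt
  have e : {ε : Fin t → Bool // dEdge l (altProd l t ε) = x} ≃
      {ε : Fin t → Bool // pos' (altProd l t ε) = 2 * l - 1 - x ∨
        pos' (altProd l t ε) = 2 * l - x} :=
    Equiv.subtypeEquivRight (fun ε => by
      rw [dEdge_eq hl]
      exact fiber_odd hl hx hxl (pos'_lt hl _))
  rw [Nat.card_congr e]
  exact card_pair (fun ε => pos' (altProd l t ε) = 2 * l - 1 - x)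
    (fun ε => pos' (altProd l t ε) = 2 * l - x) (fun ε h => by omega)

end Stmt5Aux

open Stmt5Aux in
/-- For the alternating random product `Y_t` in `D_l` with i.i.d. uniform `ε ∈ {0,1}`,
the distribution `(p_t(0),…,p_t(l-1))` of `d(Y_t, {e,a})` is non-increasing.
(Probabilities are expressed by counting the uniform sample points `ε`.) -/
theorem stmt5 (l : ℕ) (hl : 2 ≤ l) (t : ℕ) (x : ℕ) (hx : x + 1 ≤ l - 1) :
    Nat.card {ε : Fin t → Bool // dEdge l (altProd l t ε) = x + 1} ≤
      Nat.card {ε : Fin t → Bool // dEdge l (altProd l t ε) = x} := by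
  rcases Nat.eq_zero_or_pos t with rfl | ht
  · have hempty : IsEmpty {ε : Fin 0 → Bool // dEdge l (altProd l 0 ε) = x + 1} := by
      constructor
      rintro ⟨ε, hε⟩
      rw [altProd_zero, dEdge_eq hl, pos'_one] at hε
      have hWD : WD l 0 = 0 := by
        unfold WD DD stepA; split_ifs <;> first | omega | contradiction
      omega
    rw [Nat.card_of_isEmpty]
    exact Nat.zero_le _
  · have hInv : Inv l (cnt l t) := inv_cnt hl ht
    rcases Nat.mod_two_eq_zero_or_one x with hpar | hpar
    · -- x even, x + 1 odd
      rw [card_even hl hpar (by omega), card_odd hl (by omega) (by omega)]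
      have hA1 := hInv.1 (2 * l - 1 - (x + 1)) (by omega)
      have hr1 : refl1 l (2 * l - 1 - (x + 1)) = x + 3 := by
        unfold refl1; split_ifs <;> omega
      rw [hr1] at hA1
      have hA2 := hInv.1 (2 * l - (x + 1)) (by omega)
      have hr2 : refl1 l (2 * l - (x + 1)) = x + 2 := by
        unfold refl1; split_ifs <;> omega
      rw [hr2] at hA2
      rw [← hA1, ← hA2]
      have c1 : cnt l t (x + 3) ≤ cnt l t x := chain hl hInv x (x + 3) (by omega) (by omega)
      have c2 : cnt l t (x + 2) ≤ cnt l t (x + 1) :=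
        chain hl hInv (x + 1) (x + 2) (by omega) (by omega)
      omega
    · -- x odd, x + 1 even
      rw [card_odd hl hpar (by omega), card_even hl (by omega) (by omega)]
      have hxx : x + 1 + 1 = x + 2 := rfl
      rw [hxx]
      have hA1 := hInv.1 (2 * l - 1 - x) (by omega)
      have hr1 : refl1 l (2 * l - 1 - x) = x + 2 := by
        unfold refl1; split_ifs <;> omega
      rw [hr1] at hA1
      have hA2 := hInv.1 (2 * l - x) (by omega)
      have hr2 : refl1 l (2 * l - x) = x + 1 := by
        unfold refl1; split_ifs <;> omega
      rw [hr2] at hA2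
      omega
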